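/- The extension ℤ ⊂ ℤ[1/2] is a minimal ring extension: ℤ[1/2] properly contains ℤ and there is no subring S with ℤ ⊊ S ⊊ ℤ[1/2]. -/

import Mathlib

lemma half_not_bot : (1:ℚ)/2 ∉ (⊥ : Subring ℚ) := by
  rw [Subring.mem_bot]
  rintro ⟨n, hn⟩
  have h : (2:ℚ) * (n:ℚ) = 1 := by rw [hn]; ring
  have h2 : (2 * n : ℤ) = 1 := by exact_mod_cast h
  omega

lemma pow_denom (x : ℚ) (hx : x ∈ Subring.closure {(1:ℚ)/2}) :
    ∃ n : ℕ, ∃ a : ℤ, x * 2 ^ n = (a : ℚ) := by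
  induction hx using Subring.closure_induction with
  | mem y hy =>
      rw [Set.mem_singleton_iff] at hy
      exact ⟨1, 1, by rw [hy]; norm_num⟩
  | zero => exact ⟨0, 0, by norm_num⟩
  | one => exact ⟨0, 1, by norm_num⟩
  | add y z _ _ hy hz =>
      obtain ⟨n, a, ha⟩ := hy
      obtain ⟨m, b, hb⟩ := hz
      refine ⟨n + m, a * 2 ^ m + b * 2 ^ n, ?_⟩
      push_cast
      rw [pow_add]
      calc (y + z) * (2 ^ n * 2 ^ m) = (y * 2 ^ n) * 2 ^ m + (z * 2 ^ m) * 2 ^ n := by ring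
        _ = (a : ℚ) * 2 ^ m + (b : ℚ) * 2 ^ n := by rw [ha, hb]
  | neg y _ hy =>
      obtain ⟨n, a, ha⟩ := hy
      exact ⟨n, -a, by push_cast; rw [← ha]; ring⟩
  | mul y z _ _ hy hz =>
      obtain ⟨n, a, ha⟩ := hy
      obtain ⟨m, b, hb⟩ := hz
      refine ⟨n + m, a * b, ?_⟩
      push_cast
      rw [pow_add]
      calc (y * z) * (2 ^ n * 2 ^ m) = (y * 2 ^ n) * (z * 2 ^ m) := by ring
        _ = (a : ℚ) * (b : ℚ) := by rw [ha, hb]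

/-- `ℤ ⊂ ℤ[1/2]` is a minimal ring extension: viewing `ℤ[1/2]` as the subring of `ℚ`
generated by `1/2`, the prime subring `ℤ` (i.e. `⊥`) is proper in it and there is no
intermediate subring. -/
theorem stmt_9 :
    (⊥ : Subring ℚ) < Subring.closure {(1 : ℚ) / 2} ∧
      ∀ S : Subring ℚ, S ≤ Subring.closure {(1 : ℚ) / 2} →
        S = ⊥ ∨ S = Subring.closure {(1 : ℚ) / 2} := by
  constructor
  · refine lt_of_le_of_ne bot_le (fun h => half_not_bot ?_)
    rw [h]; exact Subring.subset_closure rfl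
  · intro S hS
    by_cases hb : S = ⊥
    · exact Or.inl hb
    right
    apply le_antisymm hS
    rw [Subring.closure_le, Set.singleton_subset_iff]
    obtain ⟨x, hxS, hxb⟩ : ∃ x ∈ S, x ∉ (⊥ : Subring ℚ) := by
      by_contra h
      push_neg at h
      exact hb (le_antisymm (fun y hy => h y hy) bot_le)
    have key := pow_denom x (hS hxS)
    have hP : ∃ n : ℕ, ∃ a : ℤ, x * 2 ^ n = (a : ℚ) := key
    classical
    obtain ⟨a, ha⟩ := Nat.find_spec hP
    have hpos : Nat.find hP ≠ 0 := by
      intro h0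
      apply hxb
      rw [Subring.mem_bot]
      refine ⟨a, ?_⟩
      rw [← ha, h0]
      norm_num
    obtain ⟨m, hm⟩ : ∃ m, Nat.find hP = m + 1 := ⟨Nat.find hP - 1, by omega⟩
    have hodd : ¬ 2 ∣ a := by
      rintro ⟨b, rfl⟩
      have hmin := Nat.find_min hP (by omega : m < Nat.find hP)
      apply hmin
      refine ⟨b, ?_⟩
      have h2 : x * 2 ^ (m + 1) = ((2 * b : ℤ) : ℚ) := by rw [← hm, ha]
      push_cast at h2 ⊢
      rw [pow_succ] at h2
      have h3 : (2:ℚ) * (x * 2 ^ m) = 2 * (b:ℚ) := by rw [← h2]; ring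
      linarith
    obtain ⟨b, hb2⟩ : ∃ b, a = 2 * b + 1 := ⟨a / 2, by omega⟩
    have hxm : x * 2 ^ m = (b : ℚ) + 1/2 := by
      have h2 : x * 2 ^ (m + 1) = ((2 * b + 1 : ℤ) : ℚ) := by rw [← hm, ha, hb2]
      push_cast at h2
      rw [pow_succ] at h2
      have h3 : (2:ℚ) * (x * 2 ^ m) = 2 * ((b:ℚ) + 1/2) := by linear_combination h2
      linarith
    have h2S : (2:ℚ) ∈ S := by
      have h1 := S.one_mem
      have h11 : (1:ℚ) + 1 ∈ S := S.add_mem h1 h1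
      rw [one_add_one_eq_two] at h11
      exact h11
    have hmem : x * 2 ^ m - (b:ℚ) ∈ S :=
      S.sub_mem (S.mul_mem hxS (S.pow_mem h2S m)) (intCast_mem S b)
    have heq : x * 2 ^ m - (b:ℚ) = 1/2 := by rw [hxm]; ring
    rwa [heq] at hmem
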